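/- Let C : R^{d×d} → R^{d×d} satisfy ‖C(M) − M‖_F² ≤ (1−δ)‖M‖_F² for all M, where δ ∈ [0,1]. Define the scaled operator C̃(M) := (‖M‖_F / ‖C(M)‖_F) · C(M) whenever C(M) ≠ 0 (and C̃(M) := 0 otherwise). Then for every M with ‖C(M)‖_F > ‖M‖_F, the scaled operator satisfies both ‖C̃(M)‖_F ≤ ‖M‖_F and ‖C̃(M) − M‖_F² ≤ (1−δ)‖M‖_F². -/

import Mathlib

attribute [local instance] Matrix.frobeniusNormedAddCommGroup Matrix.frobeniusNormedSpace

noncomputable local instance frobeniusInner {d : ℕ} :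
    InnerProductSpace ℝ (Matrix (Fin d) (Fin d) ℝ) :=
  InnerProductSpace.ofNorm ℝ fun x y => by
    have h := parallelogram_law_with_norm ℝ (WithLp.toLp 2 fun i => WithLp.toLp 2 (x i))
      (WithLp.toLp 2 fun i => WithLp.toLp 2 (y i))
    rw [sq, sq, sq, sq] at h
    exact h

/-- the scaled compressor `C̃(M) = (‖M‖/‖C M‖) • C M` satisfies both
contractive compressor conditions whenever `‖C M‖ > ‖M‖`. -/
theorem scaled_compressor_contractive {d : ℕ}
    (C : Matrix (Fin d) (Fin d) ℝ → Matrix (Fin d) (Fin d) ℝ)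
    (δ : ℝ) (hδ0 : 0 ≤ δ) (hδ1 : δ ≤ 1)
    (hC : ∀ M : Matrix (Fin d) (Fin d) ℝ, ‖C M - M‖ ^ 2 ≤ (1 - δ) * ‖M‖ ^ 2)
    (M : Matrix (Fin d) (Fin d) ℝ) (hM : ‖M‖ < ‖C M‖) :
    ‖(‖M‖ / ‖C M‖) • C M‖ ≤ ‖M‖ ∧
      ‖(‖M‖ / ‖C M‖) • C M - M‖ ^ 2 ≤ (1 - δ) * ‖M‖ ^ 2 := by
  set a : ℝ := ‖M‖ with ha
  set b : ℝ := ‖C M‖ with hb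
  have ha0 : 0 ≤ a := norm_nonneg _
  have hb0 : 0 < b := lt_of_le_of_lt ha0 hM
  have ht0 : 0 ≤ a / b := div_nonneg ha0 hb0.le
  have hnorm : ‖(a / b) • C M‖ = a := by
    rw [norm_smul, Real.norm_of_nonneg ht0, ← hb, div_mul_cancel₀ _ hb0.ne']
  refine ⟨le_of_eq hnorm, ?_⟩
  have hI : inner ℝ (C M) M ≤ a * b := by
    calc inner ℝ (C M) M ≤ ‖C M‖ * ‖M‖ := real_inner_le_norm _ _
    _ = a * b := by rw [← ha, ← hb]; ring
  have e1 : ‖(a / b) • C M - M‖ ^ 2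
      = ‖(a / b) • C M‖ ^ 2 - 2 * inner ℝ ((a / b) • C M) M + ‖M‖ ^ 2 :=
    norm_sub_sq_real _ _
  have e2 : ‖C M - M‖ ^ 2 = ‖C M‖ ^ 2 - 2 * inner ℝ (C M) M + ‖M‖ ^ 2 :=
    norm_sub_sq_real _ _
  have e3 : inner ℝ ((a / b) • C M) M = (a / b) * inner ℝ (C M) M :=
    real_inner_smul_left _ _ _
  have key : ‖(a / b) • C M - M‖ ^ 2 ≤ ‖C M - M‖ ^ 2 := by
    rw [e1, e2, e3, hnorm, ← ha, ← hb]
    have hab : a = (a / b) * b := by field_simp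
    nlinarith [hI, hM, ht0, sq_nonneg (b - a), mul_le_mul_of_nonneg_left hI ht0]
  exact key.trans (hC M)
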